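/- arXiv:2309.00967 — 2 statements merged into one kernel-verified Lean document; each statement's English description precedes it below -/
import Mathlib

section
/- The real Okubo algebra 𝒪 is a division algebra: for x, y ∈ 𝒪, if x*y = 0 then x = 0 or y = 0. -/
open Matrix Complex

noncomputable section

/-- `3 × 3` complex matrices. -/
abbrev M3 : Type := Matrix (Fin 3) (Fin 3) ℂ

/-- The real Okubo algebra: `3 × 3` traceless Hermitian complex matrices. -/
def Okubo : Set M3 := {x | x.IsHermitian ∧ x.trace = 0}

/-- The constant `μ = (3 + i√3)/6`. -/
def okMu : ℂ := (3 + (Real.sqrt 3 : ℂ) * Complex.I) / 6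

/-- The Okubo product `x*y = μ·(xy) + μ̄·(yx) − (1/3)Tr(xy)·Id`. -/
def omul (x y : M3) : M3 :=
  okMu • (x * y) + (starRingEnd ℂ) okMu • (y * x) - ((1 / 3 : ℂ) * (x * y).trace) • (1 : M3)

/-- The Okubic norm `n(x) = (1/6)Tr(x²)` (real-valued on Hermitian matrices). -/
def onorm (x : M3) : ℝ := (1 / 6) * ((x * x).trace).re

/-- The polar form `⟨x,y⟩ = n(x+y) − n(x) − n(y)` of the Okubic norm. -/
def opolar (x y : M3) : ℝ := onorm (x + y) - onorm x - onorm y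


private lemma ok_sqrt3_sq : ((Real.sqrt 3 : ℂ))^2 = 3 := by
  norm_cast
  rw [Real.sq_sqrt] <;> norm_num

private lemma ok_conj_mu : (starRingEnd ℂ) okMu = (3 - (Real.sqrt 3 : ℂ) * Complex.I) / 6 := by
  rw [okMu, map_div₀, map_add, _root_.map_mul, Complex.conj_I, Complex.conj_ofReal,
    map_ofNat, map_ofNat]
  ring

private lemma ok_mu_add : okMu + (starRingEnd ℂ) okMu = 1 := by
  rw [ok_conj_mu, okMu]; ring

private lemma ok_mu_mul : okMu * (starRingEnd ℂ) okMu = 1/3 := by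
  rw [ok_conj_mu, okMu]
  linear_combination (-(Complex.I)^2/36) * ok_sqrt3_sq + (-1/12 : ℂ) * Complex.I_sq

private lemma ok_comp (x y : M3) (hx : x.trace = 0) (hy : y.trace = 0) :
    6 * ((omul x y) * (omul x y)).trace = (x*x).trace * (y*y).trace := by
  simp only [omul, add_mul, mul_add, sub_mul, mul_sub, smul_mul_assoc, mul_smul_comm,
    smul_smul, one_mul, mul_one, trace_add, trace_sub, trace_smul, trace_one, smul_eq_mul,
    Fintype.card_fin, Nat.cast_ofNat]
  rw [show ((y*x*(y*x)) : M3).trace = (x*y*(x*y)).trace from ?e1,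
      show ((x*y*(y*x)) : M3).trace = (x*x*(y*y)).trace from ?e2,
      show ((y*x*(x*y)) : M3).trace = (x*x*(y*y)).trace from ?e3,
      trace_mul_comm y x]
  case e1 => simp only [Matrix.trace, Matrix.diag, Matrix.mul_apply, Fin.sum_univ_three]; ring
  case e2 => simp only [Matrix.trace, Matrix.diag, Matrix.mul_apply, Fin.sum_univ_three]; ring
  case e3 => simp only [Matrix.trace, Matrix.diag, Matrix.mul_apply, Fin.sum_univ_three]; ring
  have hL : 2 * ((x*y*(x*y)) : M3).trace + 4 * ((x*x*(y*y)) : M3).trace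
      = (x*x).trace * (y*y).trace + 2 * ((x*y).trace)^2 := by
    simp only [Matrix.trace, Matrix.diag, Matrix.mul_apply, Fin.sum_univ_three] at *
    have h2 : x 2 2 = -(x 0 0) - x 1 1 := by linear_combination hx
    have k2 : y 2 2 = -(y 0 0) - y 1 1 := by linear_combination hy
    rw [h2, k2]; ring
  linear_combination
    (6 * ((x*y*(x*y)) : M3).trace * (okMu + (starRingEnd ℂ) okMu + 1)
        - 4 * ((x*y).trace)^2) * ok_mu_add
    + (12 * ((x*x*(y*y)) : M3).trace - 12 * ((x*y*(x*y)) : M3).trace) * ok_mu_mul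
    + hL

private lemma ok_pos (x : M3) (hx : x.IsHermitian) (h : (x*x).trace = 0) : x = 0 := by
  have h' : (xᴴ * x).trace = 0 := by rw [hx]; exact h
  simp only [Matrix.trace, Matrix.diag, Matrix.mul_apply, Matrix.conjTranspose_apply,
    Fin.sum_univ_three, RCLike.star_def] at h'
  have key : ∀ z : ℂ, (starRingEnd ℂ) z * z = (Complex.normSq z : ℂ) := fun z => by
    rw [mul_comm, Complex.mul_conj]
  simp only [key] at h'
  have hr : Complex.normSq (x 0 0) + Complex.normSq (x 1 0) + Complex.normSq (x 2 0)
      + (Complex.normSq (x 0 1) + Complex.normSq (x 1 1) + Complex.normSq (x 2 1))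
      + (Complex.normSq (x 0 2) + Complex.normSq (x 1 2) + Complex.normSq (x 2 2)) = 0 := by
    exact_mod_cast h'
  have hn := fun (i j : Fin 3) => Complex.normSq_nonneg (x i j)
  have hsum : ∑ i : Fin 3, ∑ j : Fin 3, Complex.normSq (x i j) = 0 := by
    simp only [Fin.sum_univ_three]
    linarith [hr]
  have hz : ∀ i j : Fin 3, Complex.normSq (x i j) = 0 := by
    intro i j
    have h1 := (Finset.sum_eq_zero_iff_of_nonneg
      (fun i _ => Finset.sum_nonneg (fun j _ => hn i j))).mp hsum i (Finset.mem_univ i)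
    exact (Finset.sum_eq_zero_iff_of_nonneg (fun j _ => hn i j)).mp h1 j (Finset.mem_univ j)
  ext i j
  rw [Matrix.zero_apply]
  exact Complex.normSq_eq_zero.mp (hz i j)

/-- The real Okubo algebra is a division algebra:
if `x*y = 0` then `x = 0` or `y = 0`. -/
theorem okubo_paper_stmt7 :
    ∀ x ∈ Okubo, ∀ y ∈ Okubo, omul x y = 0 → x = 0 ∨ y = 0 := by
  intro x hx y hy h
  have hc := ok_comp x y hx.2 hy.2
  rw [h] at hc
  simp only [Matrix.zero_mul, Matrix.trace_zero, mul_zero] at hc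
  rcases mul_eq_zero.mp hc.symm with h1 | h1
  · exact Or.inl (ok_pos x hx.1 h1)
  · exact Or.inr (ok_pos y hy.1 h1)

end
end

section
/- Let A, B, C : 𝒪 → 𝒪 be ℝ-linear bijections of the real Okubo algebra satisfying the triality relation B(s*x) = C(s)*A(x) for all s, x ∈ 𝒪. If moreover B(e*x) = e*A(x) and B(x*e) = C(x)*e for all x ∈ 𝒪, where e = diag(2,−1,−1) is the idempotent of 𝒪, then A(e) = B(e) = C(e) = e. -/
open Matrix Complex

noncomputable section

/-- The idempotent `e = diag(2, −1, −1)` of the real Okubo algebra. -/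
def eOk : M3 := Matrix.diagonal ![2, -1, -1]

lemma hs2' : ((Real.sqrt 3 : ℝ) : ℂ)^2 = 3 := by
  norm_cast; rw [Real.sq_sqrt]; norm_num

lemma hne1' : ((3:ℂ) - 3*((Real.sqrt 3 : ℝ) : ℂ)*I) ≠ 0 := by
  intro hc
  have : ((3:ℂ) - 3*((Real.sqrt 3 : ℝ) : ℂ)*I) * ((3:ℂ) + 3*((Real.sqrt 3 : ℝ) : ℂ)*I) = 36 := by
    linear_combination (9:ℂ)*hs2' - 9*(((Real.sqrt 3 : ℝ) : ℂ)^2)*Complex.I_sq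
  rw [hc, zero_mul] at this
  norm_num at this

lemma hne2' : ((3:ℂ) + 3*((Real.sqrt 3 : ℝ) : ℂ)*I) ≠ 0 := by
  intro hc
  have : ((3:ℂ) - 3*((Real.sqrt 3 : ℝ) : ℂ)*I) * ((3:ℂ) + 3*((Real.sqrt 3 : ℝ) : ℂ)*I) = 36 := by
    linear_combination (9:ℂ)*hs2' - 9*(((Real.sqrt 3 : ℝ) : ℂ)^2)*Complex.I_sq
  rw [hc, mul_zero] at this
  norm_num at this

lemma key_right (w : M3) (hw : w.trace = 0) (h : omul w eOk = 0) : w = 0 := by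
  have hw' : w 2 2 = - w 0 0 - w 1 1 := by
    simp [Matrix.trace, Matrix.diag, Fin.sum_univ_three] at hw
    linear_combination hw
  have key : ∀ i j, okMu * (w * eOk) i j + (starRingEnd ℂ) okMu * (eOk * w) i j
      - (1/3 * (w * eOk).trace) * (1 : M3) i j = 0 := by
    intro i j
    have := congrFun (congrFun h i) j
    simpa [omul] using this
  have h00 := key 0 0; have h01 := key 0 1; have h02 := key 0 2
  have h10 := key 1 0; have h11 := key 1 1; have h12 := key 1 2
  have h21 := key 2 1
  simp [eOk, Matrix.mul_apply, Matrix.trace, Matrix.diag, Fin.sum_univ_three,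
    Matrix.one_apply, Matrix.diagonal_apply, okMu, map_div₀, map_add, _root_.map_mul,
    map_ofNat, Complex.conj_I, Complex.conj_ofReal] at h00 h01 h02 h10 h11 h12 h21
  have e01 : w 0 1 = 0 := by
    have : ((3:ℂ) - 3*((Real.sqrt 3 : ℝ) : ℂ)*I) * w 0 1 = 0 := by linear_combination (6:ℂ) * h01
    exact (mul_eq_zero.1 this).resolve_left hne1'
  have e02 : w 0 2 = 0 := by
    have : ((3:ℂ) - 3*((Real.sqrt 3 : ℝ) : ℂ)*I) * w 0 2 = 0 := by linear_combination (6:ℂ) * h02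
    exact (mul_eq_zero.1 this).resolve_left hne1'
  have e10 : w 1 0 = 0 := by
    have : ((3:ℂ) + 3*((Real.sqrt 3 : ℝ) : ℂ)*I) * w 1 0 = 0 := by linear_combination (6:ℂ) * h10
    exact (mul_eq_zero.1 this).resolve_left hne2'
  have e20 : w 2 0 = 0 := by
    have h20 := key 2 0
    simp [eOk, Matrix.mul_apply, Matrix.trace, Matrix.diag, Fin.sum_univ_three,
      Matrix.one_apply, Matrix.diagonal_apply, okMu, map_div₀, map_add, _root_.map_mul,
      map_ofNat, Complex.conj_I, Complex.conj_ofReal] at h20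
    have : ((3:ℂ) + 3*((Real.sqrt 3 : ℝ) : ℂ)*I) * w 2 0 = 0 := by linear_combination (6:ℂ) * h20
    exact (mul_eq_zero.1 this).resolve_left hne2'
  have e12 : w 1 2 = 0 := by linear_combination (-1:ℂ) * h12
  have e21 : w 2 1 = 0 := by linear_combination (-1:ℂ) * h21
  have e00 : w 0 0 = 0 := by linear_combination h00 - (1/3:ℂ) * hw'
  have e11 : w 1 1 = 0 := by linear_combination -h11 - h00 + (2/3:ℂ)*hw'
  have e22 : w 2 2 = 0 := by rw [hw', e00, e11]; ring
  ext i j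
  fin_cases i <;> fin_cases j <;>
    simp [e00, e01, e02, e10, e11, e12, e20, e21, e22]

lemma key_left (w : M3) (hw : w.trace = 0) (h : omul eOk w = 0) : w = 0 := by
  have hw' : w 2 2 = - w 0 0 - w 1 1 := by
    simp [Matrix.trace, Matrix.diag, Fin.sum_univ_three] at hw
    linear_combination hw
  have key : ∀ i j, okMu * (eOk * w) i j + (starRingEnd ℂ) okMu * (w * eOk) i j
      - (1/3 * (eOk * w).trace) * (1 : M3) i j = 0 := by
    intro i j
    have := congrFun (congrFun h i) j
    simpa [omul] using this
  have h00 := key 0 0; have h01 := key 0 1; have h02 := key 0 2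
  have h10 := key 1 0; have h11 := key 1 1; have h12 := key 1 2
  have h21 := key 2 1
  simp [eOk, Matrix.mul_apply, Matrix.trace, Matrix.diag, Fin.sum_univ_three,
    Matrix.one_apply, Matrix.diagonal_apply, okMu, map_div₀, map_add, _root_.map_mul,
    map_ofNat, Complex.conj_I, Complex.conj_ofReal] at h00 h01 h02 h10 h11 h12 h21
  have e01 : w 0 1 = 0 := by
    have : ((3:ℂ) + 3*((Real.sqrt 3 : ℝ) : ℂ)*I) * w 0 1 = 0 := by linear_combination (6:ℂ) * h01
    exact (mul_eq_zero.1 this).resolve_left hne2'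
  have e02 : w 0 2 = 0 := by
    have : ((3:ℂ) + 3*((Real.sqrt 3 : ℝ) : ℂ)*I) * w 0 2 = 0 := by linear_combination (6:ℂ) * h02
    exact (mul_eq_zero.1 this).resolve_left hne2'
  have e10 : w 1 0 = 0 := by
    have : ((3:ℂ) - 3*((Real.sqrt 3 : ℝ) : ℂ)*I) * w 1 0 = 0 := by linear_combination (6:ℂ) * h10
    exact (mul_eq_zero.1 this).resolve_left hne1'
  have e20 : w 2 0 = 0 := by
    have h20 := key 2 0
    simp [eOk, Matrix.mul_apply, Matrix.trace, Matrix.diag, Fin.sum_univ_three,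
      Matrix.one_apply, Matrix.diagonal_apply, okMu, map_div₀, map_add, _root_.map_mul,
      map_ofNat, Complex.conj_I, Complex.conj_ofReal] at h20
    have : ((3:ℂ) - 3*((Real.sqrt 3 : ℝ) : ℂ)*I) * w 2 0 = 0 := by linear_combination (6:ℂ) * h20
    exact (mul_eq_zero.1 this).resolve_left hne1'
  have e12 : w 1 2 = 0 := by linear_combination (-1:ℂ) * h12
  have e21 : w 2 1 = 0 := by linear_combination (-1:ℂ) * h21
  have e00 : w 0 0 = 0 := by linear_combination h00 - (1/3:ℂ) * hw'
  have e11 : w 1 1 = 0 := by linear_combination -h11 - h00 + (2/3:ℂ)*hw'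
  have e22 : w 2 2 = 0 := by rw [hw', e00, e11]; ring
  ext i j
  fin_cases i <;> fin_cases j <;>
    simp [e00, e01, e02, e10, e11, e12, e20, e21, e22]

lemma eOk_mem : eOk ∈ Okubo := by
  constructor
  · rw [Matrix.IsHermitian]
    ext i j
    fin_cases i <;> fin_cases j <;>
      simp [eOk, Matrix.conjTranspose_apply, Matrix.diagonal_apply]
  · simp [eOk, Matrix.trace, Matrix.diag, Fin.sum_univ_three]
    norm_num

lemma omul_ee : omul eOk eOk = eOk := by
  ext i j
  fin_cases i <;> fin_cases j <;>
    simp [omul, eOk, Matrix.mul_apply, Matrix.trace, Matrix.diag, Fin.sum_univ_three,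
      Matrix.one_apply, Matrix.diagonal_apply, okMu, map_div₀, map_add, _root_.map_mul,
      map_ofNat, Complex.conj_I, Complex.conj_ofReal] <;> ring

lemma omul_sub_left (a b c : M3) : omul (a - b) c = omul a c - omul b c := by
  simp only [omul, sub_mul, mul_sub, Matrix.trace_sub, smul_sub]
  module
lemma omul_sub_right (a b c : M3) : omul a (b - c) = omul a b - omul a c := by
  simp only [omul, sub_mul, mul_sub, Matrix.trace_sub, smul_sub]
  module

/-- Let `A, B, C` be ℝ-linear bijections of the real Okubo algebra
satisfying the triality relation `B(s*x) = C(s)*A(x)`. If moreover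
`B(e*x) = e*A(x)` and `B(x*e) = C(x)*e` for all `x ∈ 𝒪`, then
`A(e) = B(e) = C(e) = e`. -/

theorem okubo_paper_stmt19 (A B C : M3 → M3)
    (hAbij : Set.BijOn A Okubo Okubo)
    (hBbij : Set.BijOn B Okubo Okubo)
    (hCbij : Set.BijOn C Okubo Okubo)
    (hAadd : ∀ x ∈ Okubo, ∀ y ∈ Okubo, A (x + y) = A x + A y)
    (hBadd : ∀ x ∈ Okubo, ∀ y ∈ Okubo, B (x + y) = B x + B y)
    (hCadd : ∀ x ∈ Okubo, ∀ y ∈ Okubo, C (x + y) = C x + C y)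
    (hAsmul : ∀ (c : ℝ), ∀ x ∈ Okubo, A (c • x) = c • A x)
    (hBsmul : ∀ (c : ℝ), ∀ x ∈ Okubo, B (c • x) = c • B x)
    (hCsmul : ∀ (c : ℝ), ∀ x ∈ Okubo, C (c • x) = c • C x)
    (htri : ∀ s ∈ Okubo, ∀ x ∈ Okubo, B (omul s x) = omul (C s) (A x))
    (h1 : ∀ x ∈ Okubo, B (omul eOk x) = omul eOk (A x))
    (h2 : ∀ x ∈ Okubo, B (omul x eOk) = omul (C x) eOk) :
    A eOk = eOk ∧ B eOk = eOk ∧ C eOk = eOk := by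
  have heO := eOk_mem
  -- C eOk = eOk
  obtain ⟨x, hx, hAx⟩ := hAbij.surjOn heO
  have hCe : omul (C eOk) eOk = eOk := by
    have t1 := htri eOk heO x hx
    have t2 := h1 x hx
    rw [hAx] at t1 t2
    rw [← t1, t2, omul_ee]
  have hCeq : C eOk = eOk := by
    have hz : C eOk - eOk = 0 := by
      apply key_right
      · rw [Matrix.trace_sub, (hCbij.mapsTo heO).2, heO.2, sub_self]
      · rw [omul_sub_left, hCe, omul_ee, sub_self]
    rw [sub_eq_zero] at hz
    exact hz
  -- A eOk = eOk
  obtain ⟨s, hs, hCs⟩ := hCbij.surjOn heO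
  have hAe : omul eOk (A eOk) = eOk := by
    have t1 := htri s hs eOk heO
    have t2 := h2 s hs
    rw [hCs] at t1 t2
    rw [← t1, t2, omul_ee]
  have hAeq : A eOk = eOk := by
    have hz : A eOk - eOk = 0 := by
      apply key_left
      · rw [Matrix.trace_sub, (hAbij.mapsTo heO).2, heO.2, sub_self]
      · rw [omul_sub_right, hAe, omul_ee, sub_self]
    rw [sub_eq_zero] at hz
    exact hz
  -- B eOk = eOk
  have hBe : B eOk = eOk := by
    have t := h1 eOk heO
    rw [omul_ee, hAeq, omul_ee] at t
    exact t
  exact ⟨hAeq, hBe, hCeq⟩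

end
end
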